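/- Let p be a prime, let d ≥ 2 be an integer, let a be a nonzero rational number, and let b = σ·p^e with σ ∈ {1, −1} and e a nonnegative integer. Then every rational periodic cycle of ψ_{d,a,b} on ℙ¹(ℚ) has length at most 2 (i.e., every point of ℙ¹(ℚ) that is periodic under ψ_{d,a,b} has exact period 1 or 2). -/

import Mathlib

/-- The map `ψ_{d,a,b} : ℙ¹(ℚ) → ℙ¹(ℚ)`, with `ℙ¹(ℚ)` modeled as `Option ℚ`
(`some z` is the affine point `z`, and `none` is the point at infinity `[1 : 0]`).
In homogeneous coordinates the map is `[X : Y] ↦ [X·Y^{d−1} : a·X^d + b·Y^d]`;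
on the affine chart it is `z ↦ z / (a·z^d + b)`, the point at infinity mapping to `0`. -/
def psi (d : ℕ) (a b : ℚ) : Option ℚ → Option ℚ
  | none => some 0
  | some z => if a * z ^ d + b = 0 then none else some (z / (a * z ^ d + b))

lemma sgn_ne_zero' {s : ℚ} (hs : s = 1 ∨ s = -1) : s ≠ 0 := by rcases hs with h | h <;> simp [h]

lemma sign_abs' {s : ℚ} (hs : s = 1 ∨ s = -1) : |s| = 1 := by rcases hs with h | h <;> simp [h]

lemma sign_zpow_inj' (p : ℕ) (hp : 2 ≤ p) {s s' : ℚ} (hs : s = 1 ∨ s = -1)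
    (hs' : s' = 1 ∨ s' = -1) {m m' : ℤ} (h : s * (p:ℚ)^m = s' * (p:ℚ)^m') :
    s = s' ∧ m = m' := by
  have hp1 : (1:ℚ) < p := by exact_mod_cast hp
  have hppos : (0:ℚ) < p := by linarith
  have habs : (p:ℚ)^m = (p:ℚ)^m' := by
    have h2 := congrArg abs h
    rwa [abs_mul, abs_mul, sign_abs' hs, sign_abs' hs', one_mul, one_mul,
      abs_of_pos (zpow_pos hppos m), abs_of_pos (zpow_pos hppos m')] at h2
  have hm : m = m' := zpow_right_injective₀ (by positivity) (ne_of_gt hp1) habs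
  subst hm
  have hne : (p:ℚ)^m ≠ 0 := ne_of_gt (zpow_pos hppos m)
  exact ⟨(mul_left_inj' hne).mp h, rfl⟩

lemma pv_zpow' (p : ℕ) [hp : Fact p.Prime] (m : ℤ) : padicValRat p ((p:ℚ)^m) = m := by
  rcases le_or_gt 0 m with h | h
  · lift m to ℕ using h
    rw [zpow_natCast, padicValRat.pow _,
      padicValRat.self hp.out.one_lt, mul_one]
  · obtain ⟨n, rfl⟩ : ∃ n : ℕ, m = -n := ⟨m.natAbs, by omega⟩
    rw [zpow_neg, zpow_natCast, padicValRat.self_pow_inv]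

lemma pv_sign_zpow' (p : ℕ) [hp : Fact p.Prime] {s : ℚ} (hs : s = 1 ∨ s = -1) (m : ℤ) :
    padicValRat p (s * (p:ℚ)^m) = m := by
  rcases hs with h | h
  · rw [h, one_mul, pv_zpow']
  · rw [h, neg_one_mul, padicValRat.neg, pv_zpow']

lemma opp_sign {s s' : ℚ} (hs : s = 1 ∨ s = -1) (hs' : s' = 1 ∨ s' = -1) (hne : s' ≠ s) :
    s' = -s := by rcases hs with h | h <;> rcases hs' with h' | h' <;> simp_all

lemma neg_sign {s : ℚ} (hs : s = 1 ∨ s = -1) : -s = 1 ∨ -s = -1 := by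
  rcases hs with h | h <;> simp [h]

lemma mul_sign' {s s' : ℚ} (hs : s = 1 ∨ s = -1) (hs' : s' = 1 ∨ s' = -1) :
    s * s' = 1 ∨ s * s' = -1 := by
  rcases hs with h | h <;> rcases hs' with h' | h' <;> simp [h, h']

lemma sign_mul_self' {s : ℚ} (hs : s = 1 ∨ s = -1) : s * s = 1 := by
  rcases hs with h | h <;> rw [h] <;> norm_num

lemma P2 {s₁ s₂ s₃ : ℚ} (h₁ : s₁ = 1 ∨ s₁ = -1) (h₂ : s₂ = 1 ∨ s₂ = -1)
    (h₃ : s₃ = 1 ∨ s₃ = -1) {x y k : ℤ}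
    (h : s₁ * ((2:ℕ):ℚ)^x + s₂ * ((2:ℕ):ℚ)^y = s₃ * ((2:ℕ):ℚ)^k) :
    (x = y ∧ s₂ = s₁ ∧ s₃ = s₁ ∧ k = x + 1) ∨
    (y = x + 1 ∧ s₂ = -s₁ ∧ s₃ = -s₁ ∧ k = x) ∨
    (x = y + 1 ∧ s₁ = -s₂ ∧ s₃ = s₁ ∧ k = y) := by
  haveI : Fact (Nat.Prime 2) := ⟨Nat.prime_two⟩
  have h2pos : (0:ℚ) < ((2:ℕ):ℚ) := by norm_num
  have h2ne : ((2:ℕ):ℚ) ≠ 0 := by norm_num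
  have hzk : ((2:ℕ):ℚ)^k ≠ 0 := ne_of_gt (zpow_pos h2pos k)
  have hzx : ((2:ℕ):ℚ)^x ≠ 0 := ne_of_gt (zpow_pos h2pos x)
  have hzy : ((2:ℕ):ℚ)^y ≠ 0 := ne_of_gt (zpow_pos h2pos y)
  have hRHS : s₃ * ((2:ℕ):ℚ)^k ≠ 0 := mul_ne_zero (sgn_ne_zero' h₃) hzk
  rcases lt_trichotomy x y with hxy | hxy | hxy
  · right; left
    have hval : padicValRat 2 (s₁ * ((2:ℕ):ℚ)^x + s₂ * ((2:ℕ):ℚ)^y) = x := by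
      rw [padicValRat.add_eq_of_lt (p := 2) (by rw [h]; exact hRHS)
          (mul_ne_zero (sgn_ne_zero' h₁) hzx) (mul_ne_zero (sgn_ne_zero' h₂) hzy)
          (by rw [pv_sign_zpow' 2 h₁, pv_sign_zpow' 2 h₂]; exact hxy),
          pv_sign_zpow' 2 h₁]
    have hk : k = x := by rw [h, pv_sign_zpow' 2 h₃] at hval; omega
    subst hk
    have hs₃ : s₃ ≠ s₁ := by
      intro he
      apply hzy
      have h0 : s₂ * ((2:ℕ):ℚ)^y = 0 := by
        rw [he] at h; linear_combination h
      rcases h₂ with h'|h' <;> rw [h'] at h0 <;> linarith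
    have hs₃' : s₃ = -s₁ := opp_sign h₁ h₃ hs₃
    have key : s₂ * ((2:ℕ):ℚ)^y = (-s₁) * ((2:ℕ):ℚ)^(k+1) := by
      rw [zpow_add_one₀ h2ne]
      linear_combination h + ((2:ℕ):ℚ)^k * hs₃'
    obtain ⟨e1, e2⟩ := sign_zpow_inj' 2 (le_refl 2) h₂ (neg_sign h₁) key
    exact ⟨e2, e1, hs₃', rfl⟩
  · subst hxy
    left
    by_cases hss : s₂ = s₁
    · subst hss
      have key : s₂ * ((2:ℕ):ℚ)^(x+1) = s₃ * ((2:ℕ):ℚ)^k := by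
        rw [zpow_add_one₀ h2ne]
        linear_combination h
      obtain ⟨e1, e2⟩ := sign_zpow_inj' 2 (le_refl 2) h₂ h₃ key
      exact ⟨rfl, rfl, e1.symm, e2.symm⟩
    · exfalso
      have hs' : s₂ = -s₁ := opp_sign h₁ h₂ hss
      apply hRHS
      rw [← h, hs']
      ring
  · right; right
    have hval : padicValRat 2 (s₁ * ((2:ℕ):ℚ)^x + s₂ * ((2:ℕ):ℚ)^y) = y := by
      rw [add_comm, padicValRat.add_eq_of_lt (p := 2) (by rw [add_comm, h]; exact hRHS)
          (mul_ne_zero (sgn_ne_zero' h₂) hzy) (mul_ne_zero (sgn_ne_zero' h₁) hzx)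
          (by rw [pv_sign_zpow' 2 h₁, pv_sign_zpow' 2 h₂]; exact hxy),
          pv_sign_zpow' 2 h₂]
    have hk : k = y := by rw [h, pv_sign_zpow' 2 h₃] at hval; omega
    subst hk
    have hs₃ : s₃ ≠ s₂ := by
      intro he
      apply hzx
      have h0 : s₁ * ((2:ℕ):ℚ)^x = 0 := by
        rw [he] at h; linear_combination h
      rcases h₁ with h'|h' <;> rw [h'] at h0 <;> linarith
    have hs₃' : s₃ = -s₂ := opp_sign h₂ h₃ hs₃
    have key : s₁ * ((2:ℕ):ℚ)^x = (-s₂) * ((2:ℕ):ℚ)^(k+1) := by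
      rw [zpow_add_one₀ h2ne]
      linear_combination h + ((2:ℕ):ℚ)^k * hs₃'
    obtain ⟨e1, e2⟩ := sign_zpow_inj' 2 (le_refl 2) h₁ (neg_sign h₂) key
    refine ⟨e2, e1, ?_, rfl⟩
    rw [hs₃', ← e1]

lemma part_c (p : ℕ) (hp : p.Prime) (x : ℚ) (hx : x ≠ 0)
    (h : ∀ q : ℕ, q.Prime → q ≠ p → padicValRat q x = 0) :
    ∃ (s : ℚ) (m : ℤ), (s = 1 ∨ s = -1) ∧ x = s * (p:ℚ) ^ m := by
  have hnum : x.num ≠ 0 := Rat.num_ne_zero.2 hx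
  have hna : x.num.natAbs ≠ 0 := Int.natAbs_ne_zero.2 hnum
  have hden : x.den ≠ 0 := x.den_nz
  have key : ∀ q : ℕ, q.Prime → (q ∣ x.num.natAbs ∨ q ∣ x.den) → q = p := by
    intro q hq hdvd
    by_contra hqp
    have h0 := h q hq hqp
    haveI : Fact q.Prime := ⟨hq⟩
    have hcop : Nat.Coprime x.num.natAbs x.den := x.reduced
    rw [padicValRat, padicValInt] at h0
    rcases hdvd with hd | hd
    · have hnd : ¬ q ∣ x.den := fun hdd => hq.one_lt.ne' (Nat.eq_one_of_dvd_coprimes hcop hd hdd)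
      rw [padicValNat.eq_zero_of_not_dvd hnd] at h0
      have := one_le_padicValNat_of_dvd hna hd
      omega
    · have hnd : ¬ q ∣ x.num.natAbs := fun hdd => hq.one_lt.ne' (Nat.eq_one_of_dvd_coprimes hcop hdd hd)
      rw [padicValNat.eq_zero_of_not_dvd hnd] at h0
      have := one_le_padicValNat_of_dvd hden hd
      omega
  obtain hnum_pow := Nat.eq_prime_pow_of_unique_prime_dvd hna (fun hd hdd => key _ hd (Or.inl hdd))
  obtain hden_pow := Nat.eq_prime_pow_of_unique_prime_dvd hden (fun hd hdd => key _ hd (Or.inr hdd))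
  set j := x.num.natAbs.primeFactorsList.length
  set l := x.den.primeFactorsList.length
  have hxval : x = (x.num : ℚ) / (x.den : ℚ) := by exact_mod_cast (Rat.num_div_den x).symm
  rcases Int.natAbs_eq x.num with he | he
  · refine ⟨1, (j : ℤ) - l, Or.inl rfl, ?_⟩
    rw [hxval, he, hnum_pow, hden_pow]
    push_cast
    rw [zpow_sub₀ (by exact_mod_cast hp.ne_zero), zpow_natCast, zpow_natCast]
    ring
  · refine ⟨-1, (j : ℤ) - l, Or.inr rfl, ?_⟩
    rw [hxval, he, hnum_pow, hden_pow]
    push_cast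
    rw [zpow_sub₀ (by exact_mod_cast hp.ne_zero), zpow_natCast, zpow_natCast]
    ring


lemma seqB (d : ℕ) (hd : 2 ≤ d) (α : ℤ) (n : ℕ) (hn : 1 ≤ n) (t : ℕ → ℤ)
    (hper : ∀ i, t (i + n) = t i)
    (hneg : ∀ i, d * t i + α < 0 → t (i + 1) = t i - (d * t i + α))
    (hpos : ∀ i, 0 < d * t i + α → t (i + 1) = t i)
    (hzero : ∀ i, d * t i + α = 0 → t (i + 1) ≤ t i) :
    ∀ i, t (i + 1) = t i := by
  have hconst : ∀ i, 0 < d * t i + α → ∀ k, t (i + k) = t i := by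
    intro i hi k
    induction k with
    | zero => rfl
    | succ k ih =>
      show t (i + k + 1) = t i
      rw [hpos _ (by rw [ih]; exact hi), ih]
  intro i
  by_contra hne
  rcases lt_trichotomy (d * t i + α) 0 with hs | hs | hs
  · have h1 : t (i + 1) = t i - (d * t i + α) := hneg i hs
    have h2 : 0 < d * t (i + 1) + α := by
      have h : d * t (i+1) + α = (1 - d) * (d * t i + α) := by rw [h1]; ring
      rw [h]
      have : (1 : ℤ) - d ≤ -1 := by omega
      nlinarith
    have h3 : t (i + 1 + (n - 1)) = t (i + 1) := hconst _ h2 _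
    have h4 : i + 1 + (n - 1) = i + n := by omega
    rw [h4, hper] at h3
    omega
  · have h1 : t (i + 1) < t i := lt_of_le_of_ne (hzero i hs) hne
    have h2 : d * t (i + 1) + α < 0 := by nlinarith
    have h3 : t (i + 1 + 1) = t (i + 1) - (d * t (i + 1) + α) := hneg (i + 1) h2
    have h4 : 0 < d * t (i + 1 + 1) + α := by
      have h : d * t (i+1+1) + α = (1 - d) * (d * t (i+1) + α) := by rw [h3]; ring
      rw [h]
      have : (1 : ℤ) - d ≤ -1 := by omega
      nlinarith
    have h5 : t (i + 1 + 1 + (n - 1)) = t (i + 1 + 1) := hconst _ h4 _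
    have h6 : i + 1 + 1 + (n - 1) = i + 1 + n := by omega
    rw [h6, hper] at h5
    omega
  · exact hne (hpos i hs)

lemma seqF (d : ℕ) (hd : 2 ≤ d) (n : ℕ) (hn : 1 ≤ n) (y : ℕ → ℤ)
    (hper : ∀ i, y (i + n) = y i)
    (hstep : ∀ i, y (i + 1) = (1 - d) * y i ∨ (0 ≤ y i ∧ y (i + 1) < (1 - d) * y i)) :
    ∀ i, y (i + 1) = (1 - d) * y i ∧ (d - 2 : ℤ) * |y i| = 0 := by
  have habs : ∀ i, (d - 1 : ℤ) * |y i| ≤ |y (i + 1)| ∧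
      (y (i+1) ≠ (1-d) * y i → (d - 1 : ℤ) * |y i| < |y (i + 1)|) := by
    intro i
    rcases hstep i with h | ⟨h0, h⟩
    · refine ⟨?_, fun hne => absurd h hne⟩
      rw [h, abs_mul]
      have h2 : |(1 - d : ℤ)| = d - 1 := by rw [abs_of_nonpos (by omega)]; omega
      rw [h2]
    · have h1 : y (i + 1) < 0 := lt_of_lt_of_le h (by nlinarith)
      have h2 : |y (i+1)| = -y (i+1) := abs_of_neg h1
      have h3 : |y i| = y i := abs_of_nonneg h0
      exact ⟨by rw [h2, h3]; nlinarith, fun _ => by rw [h2, h3]; nlinarith⟩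
  have hmono : ∀ i, |y i| ≤ |y (i + 1)| := by
    intro i
    have := (habs i).1
    nlinarith [abs_nonneg (y i)]
  have hmonok : ∀ i k, |y i| ≤ |y (i + k)| := by
    intro i k
    induction k with
    | zero => exact le_refl _
    | succ k ih => exact le_trans ih (hmono (i + k))
  have heq : ∀ i, |y (i + 1)| = |y i| := by
    intro i
    have h1 : |y (i + 1)| ≤ |y (i + 1 + (n - 1))| := hmonok _ _
    have h2 : i + 1 + (n - 1) = i + n := by omega
    rw [h2, hper] at h1
    have h3 : |y i| ≤ |y (i + 1)| := hmono i
    omega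
  intro i
  have hgood : y (i + 1) = (1 - d) * y i := by
    by_contra hne
    have := (habs i).2 hne
    have := heq i
    nlinarith [abs_nonneg (y i)]
  refine ⟨hgood, ?_⟩
  have := (habs i).1
  have := heq i
  nlinarith [abs_nonneg (y i)]

lemma triE (p : ℕ) [hp : Fact p.Prime] {σ δ T : ℚ} {E k y : ℤ}
    (hσ : σ = 1 ∨ σ = -1) (hδ : δ = 1 ∨ δ = -1) (hT : T ≠ 0)
    (hy : padicValRat p T = y) (heq : T + σ * (p:ℚ)^E = δ * (p:ℚ)^k) :
    (k < E ∧ y = k) ∨ (E < k ∧ y = E) ∨ (k = E ∧ δ = -σ) := by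
  have hppos : (0:ℚ) < p := by exact_mod_cast hp.out.pos
  have hpk : (p:ℚ)^k ≠ 0 := ne_of_gt (zpow_pos hppos k)
  have hpE : (p:ℚ)^E ≠ 0 := ne_of_gt (zpow_pos hppos E)
  have hTeq : T = δ * (p:ℚ)^k + (-σ) * (p:ℚ)^E := by rw [← heq]; ring
  have hδ0 := sgn_ne_zero' hδ
  have hσ0 := sgn_ne_zero' hσ
  have hmσ : -σ = 1 ∨ -σ = -1 := by rcases hσ with h | h <;> simp [h]
  rcases lt_trichotomy k E with hkE | hkE | hkE
  · left; refine ⟨hkE, ?_⟩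
    rw [hTeq] at hy
    rw [padicValRat.add_eq_of_lt (p := p) (by rw [← hTeq]; exact hT)
      (mul_ne_zero hδ0 hpk) (mul_ne_zero (neg_ne_zero.2 hσ0) hpE)
      (by rw [pv_sign_zpow' p hδ, pv_sign_zpow' p hmσ]; exact hkE),
      pv_sign_zpow' p hδ] at hy
    exact hy.symm
  · right; right
    refine ⟨hkE, ?_⟩
    rw [hkE] at hTeq
    have h2 : T = (δ - σ) * (p:ℚ)^E := by rw [hTeq]; ring
    rcases hδ with h | h <;> rcases hσ with h' | h'
    · exfalso; apply hT; rw [h2, h, h']; ring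
    · simp [h, h']
    · simp [h, h']
    · exfalso; apply hT; rw [h2, h, h']; ring
  · right; left
    refine ⟨hkE, ?_⟩
    rw [hTeq] at hy
    rw [add_comm] at hy
    rw [padicValRat.add_eq_of_lt (p := p) (by rw [add_comm, ← hTeq]; exact hT)
      (mul_ne_zero (neg_ne_zero.2 hσ0) hpE) (mul_ne_zero hδ0 hpk)
      (by rw [pv_sign_zpow' p hmσ, pv_sign_zpow' p hδ]; exact hkE),
      pv_sign_zpow' p hmσ] at hy
    exact hy.symm


lemma lemL_aux (p : ℕ) (hp : p.Prime) (α β : ℤ) (hlt : β < α) (hpar : (α + β) % 2 = 0)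
    (c : ℚ) (hc : c = 2 ∨ c = -2) (h : (p:ℚ)^α - (p:ℚ)^β = c) : False := by
  have hp1 : (1:ℚ) < p := by exact_mod_cast hp.one_lt
  have hppos : (0:ℚ) < p := by linarith
  have hcpos : (0:ℚ) < c := by
    rw [← h]
    have := zpow_lt_zpow_right₀ hp1 hlt
    linarith
  have hc2 : c = 2 := by rcases hc with h' | h' <;> [exact h'; (rw [h'] at hcpos; linarith)]
  subst hc2
  rcases le_or_gt 0 β with hβ | hβ
  · have hα0 : 0 ≤ α := le_trans hβ hlt.le
    lift β to ℕ using hβ with B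
    lift α to ℕ using hα0 with A
    have hAB : B < A := by exact_mod_cast hlt
    have hnat : p ^ A = p ^ B + 2 := by
      have h2 : (p:ℚ) ^ A = (p:ℚ) ^ B + 2 := by
        rw [← zpow_natCast (p:ℚ) A, ← zpow_natCast (p:ℚ) B]; linarith
      exact_mod_cast h2
    have hdvd : p ^ B ∣ 2 := (Nat.dvd_add_right (dvd_refl (p ^ B))).mp
      (by rw [← hnat]; exact pow_dvd_pow p hAB.le)
    have hle : p ^ B ≤ 2 := Nat.le_of_dvd (by norm_num) hdvd
    rcases Nat.eq_zero_or_pos B with hB0 | hBpos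
    · subst hB0
      simp only [pow_zero] at hnat
      have hpA : p ∣ 3 := by rw [show (3:ℕ) = 1 + 2 by norm_num, ← hnat]
                             exact dvd_pow_self p (by omega)
      have hp3 : p = 3 := ((Nat.prime_dvd_prime_iff_eq hp (by norm_num)).mp hpA)
      subst hp3
      have hA1 : A = 1 := by
        rcases Nat.lt_or_ge A 2 with h' | h'
        · omega
        · exfalso; have : 3 ^ 2 ≤ 3 ^ A := Nat.pow_le_pow_right (by norm_num) h'; omega
      omega
    · have hpB : p ≤ p ^ B := Nat.le_self_pow hBpos.ne' p
      have hp2 : p = 2 := by have := hp.two_le; omega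
      subst hp2
      have hB1 : B = 1 := by
        rcases Nat.lt_or_ge B 2 with h' | h'
        · omega
        · exfalso; have : 2 ^ 2 ≤ 2 ^ B := Nat.pow_le_pow_right (by norm_num) h'; omega
      subst hB1
      have hA2 : A = 2 := by
        rcases Nat.lt_or_ge A 3 with h' | h'
        · omega
        · exfalso; have : 2 ^ 3 ≤ 2 ^ A := Nat.pow_le_pow_right (by norm_num) h'
          simp only [pow_one] at hnat; omega
      omega
  · set B : ℕ := (-β).toNat with hBdef
    have hBpos : 1 ≤ B := by omega
    have hβB : β = -(B:ℤ) := by omega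
    have hG0 : 0 < α + B := by omega
    set G : ℕ := (α + B).toNat with hGdef
    have hαG : α = (G:ℤ) - B := by omega
    have hpne : (p:ℚ) ≠ 0 := ne_of_gt hppos
    have hmul : (p:ℚ)^(G:ℤ) - 1 = 2 * (p:ℚ)^(B:ℤ) := by
      have h2 := congrArg (fun x : ℚ => x * (p:ℚ)^(B:ℤ)) h
      simp only [sub_mul, ← zpow_add₀ hpne] at h2
      rw [hαG, hβB] at h2
      have e1 : (G:ℤ) - B + B = (G:ℤ) := by ring
      have e2 : -(B:ℤ) + B = 0 := by ring
      rw [e1, e2, zpow_zero] at h2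
      linarith [h2]
    have hnat : p ^ G = 2 * p ^ B + 1 := by
      have h2 : (p:ℚ) ^ G = 2 * (p:ℚ) ^ B + 1 := by
        rw [← zpow_natCast (p:ℚ) G, ← zpow_natCast (p:ℚ) B]; linarith
      exact_mod_cast h2
    have h1 : p ∣ p ^ G := dvd_pow_self p (by omega)
    have h2 : p ∣ 2 * p ^ B := Dvd.dvd.mul_left (dvd_pow_self p (by omega)) 2
    have h3 : p ∣ 1 := (Nat.dvd_add_right h2).mp (hnat ▸ h1)
    have := Nat.le_of_dvd (by norm_num) h3
    have := hp.two_le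
    omega

lemma lemL (p : ℕ) (hp : p.Prime) (α β : ℤ) (hne : α ≠ β) (hpar : (α + β) % 2 = 0)
    (c : ℚ) (hc : c = 2 ∨ c = -2) (h : (p:ℚ)^α - (p:ℚ)^β = c) : False := by
  rcases lt_or_gt_of_ne hne with hlt | hlt
  · exact lemL_aux p hp β α hlt (by omega) (-c) (by rcases hc with h'|h' <;> simp [h'])
      (by rw [← h]; ring)
  · exact lemL_aux p hp α β hlt hpar c hc h

lemma lemL2 (p : ℕ) (hp : p.Prime) (α β g : ℤ) (hne : α ≠ β) (hpar : (α + β - 2*g) % 2 = 0)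
    (c : ℚ) (hc : c = 2 ∨ c = -2) (h : (p:ℚ)^α - (p:ℚ)^β = c * (p:ℚ)^g) : False := by
  have hppos : (0:ℚ) < p := by exact_mod_cast hp.pos
  have hpne : (p:ℚ) ≠ 0 := ne_of_gt hppos
  apply lemL p hp (α - g) (β - g) (by omega) (by omega) c hc
  have h2 := congrArg (fun x : ℚ => x * (p:ℚ)^(-g)) h
  rw [sub_mul, ← zpow_add₀ hpne, ← zpow_add₀ hpne,
    show α + -g = α - g by ring, show β + -g = β - g by ring,
    mul_assoc, ← zpow_add₀ hpne, show g + -g = (0:ℤ) by ring, zpow_zero, mul_one] at h2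
  exact h2


/-- Let `p` be a prime, `d ≥ 2`, `a` a nonzero rational, and
`b = σ·p^e` with `σ ∈ {1,−1}` and `e ≥ 0`. Then every rational periodic point of
`ψ_{d,a,b}` has exact period (minimal period) `1` or `2`, i.e. every rational
periodic cycle has length at most `2`. -/
theorem periodic_cycle_length_le_two
    (p : ℕ) (hp : p.Prime) (d : ℕ) (hd : 2 ≤ d) (a : ℚ) (ha : a ≠ 0)
    (σ : ℚ) (hσ : σ = 1 ∨ σ = -1) (e : ℕ) (b : ℚ) (hb : b = σ * (p : ℚ) ^ e)
    (P : Option ℚ) (hP : ∃ n : ℕ, 0 < n ∧ (psi d a b)^[n] P = P) :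
    Function.minimalPeriod (psi d a b) P = 1 ∨
      Function.minimalPeriod (psi d a b) P = 2 := by
  classical
  set f := psi d a b with hf
  obtain ⟨n₀, hn₀pos, hn₀⟩ := hP
  have hper0 : Function.IsPeriodicPt f n₀ P := hn₀
  have hnpos : 0 < Function.minimalPeriod f P := hper0.minimalPeriod_pos hn₀pos
  set n := Function.minimalPeriod f P with hn
  by_contra hcon
  push_neg at hcon
  obtain ⟨hne1, hne2⟩ := hcon
  have hn3 : 3 ≤ n := by omega
  have hppos : (0:ℚ) < p := by exact_mod_cast hp.pos
  have hb0 : b ≠ 0 := by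
    rw [hb]
    exact mul_ne_zero (by rcases hσ with h|h <;> simp [h]) (pow_ne_zero _ (ne_of_gt hppos))
  have h0d : a * (0:ℚ) ^ d + b = b := by
    rw [zero_pow (show d ≠ 0 by omega), mul_zero, zero_add]
  have hfix : f (some 0) = some 0 := by
    show psi d a b (some 0) = some 0
    rw [show psi d a b (some 0)
        = if a * (0:ℚ) ^ d + b = 0 then none else some (0 / (a * (0:ℚ) ^ d + b)) from rfl,
      h0d, if_neg hb0, zero_div]
  have hfixiter : ∀ j, f^[j] (some 0) = some 0 := by
    intro j
    induction j with
    | zero => rfl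
    | succ j ih => rw [Function.iterate_succ_apply', ih, hfix]
  have hiter_n : f^[n] P = P := Function.iterate_minimalPeriod
  have hiter_mul : ∀ j, f^[j * n] P = P := by
    intro j
    induction j with
    | zero => rw [Nat.zero_mul]; rfl
    | succ j ih => rw [add_mul, one_mul, Function.iterate_add_apply, hiter_n, ih]
  have hnot0 : ∀ i, f^[i] P ≠ some 0 := by
    intro i h0
    have hP0 : P = some 0 := by
      have h1 : f^[(i + 1) * n] P = P := hiter_mul (i + 1)
      have hle : i + 1 ≤ (i + 1) * n := Nat.le_mul_of_pos_right _ hnpos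
      have h2 : (i + 1) * n = ((i+1) * n - i) + i := by omega
      rw [h2, Function.iterate_add_apply, h0, hfixiter] at h1
      exact h1.symm
    have : n = 1 := by
      rw [hn]
      exact Function.minimalPeriod_eq_one_iff_isFixedPt.2 (by rw [hP0]; exact hfix)
    omega
  have hnotnone : ∀ i, f^[i] P ≠ none := by
    intro i h0
    apply hnot0 (i + 1)
    rw [Function.iterate_succ_apply', h0]
    rfl
  have hzex : ∀ i, ∃ w : ℚ, f^[i] P = some w := by
    intro i
    rcases h : f^[i] P with _ | w
    · exact absurd h (hnotnone i)
    · exact ⟨w, rfl⟩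
  choose z hz using hzex
  have hz0 : ∀ i, z i ≠ 0 := by
    intro i h0
    apply hnot0 i
    rw [hz i, h0]
  have hD : ∀ i, a * z i ^ d + b ≠ 0 := by
    intro i h0
    apply hnotnone (i + 1)
    rw [Function.iterate_succ_apply', hz i]
    show psi d a b (some (z i)) = none
    rw [show psi d a b (some (z i))
        = if a * z i ^ d + b = 0 then none else some (z i / (a * z i ^ d + b)) from rfl,
      if_pos h0]
  have hstep : ∀ i, z (i + 1) = z i / (a * z i ^ d + b) := by
    intro i
    have h1 : f^[i+1] P = some (z i / (a * z i ^ d + b)) := by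
      rw [Function.iterate_succ_apply', hz i]
      show psi d a b (some (z i)) = _
      rw [show psi d a b (some (z i))
          = if a * z i ^ d + b = 0 then none else some (z i / (a * z i ^ d + b)) from rfl,
        if_neg (hD i)]
    rw [hz (i+1)] at h1
    exact Option.some.inj h1
  have hzper : ∀ i, z (i + n) = z i := by
    intro i
    have h1 : f^[i + n] P = f^[i] P := by
      rw [Function.iterate_add_apply, hiter_n]
    rw [hz, hz] at h1
    exact Option.some.inj h1
  have hzinj : ∀ i j, i < n → j < n → z i = z j → i = j := by
    intro i j hi hj hij
    have := Function.iterate_injOn_Iio_minimalPeriod (f := f) (x := P)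
      (Set.mem_Iio.2 hi) (Set.mem_Iio.2 hj)
      (by rw [show (f^[·] P) i = f^[i] P from rfl, show (f^[·] P) j = f^[j] P from rfl,
        hz, hz, hij])
    exact this

  -- Part B : for q ≠ p, the q-adic valuation of a * z i ^ d + b is 0
  have hDval : ∀ q : ℕ, q.Prime → q ≠ p → ∀ i, padicValRat q (a * z i ^ d + b) = 0 := by
    intro q hq hqp
    haveI : Fact q.Prime := ⟨hq⟩
    have hbq : padicValRat q b = 0 := by
      rw [hb, padicValRat.mul (sgn_ne_zero' hσ) (pow_ne_zero _ (ne_of_gt hppos))]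
      have h1 : padicValRat q σ = 0 := by
        rcases hσ with h|h <;> rw [h]
        · exact padicValRat.one
        · rw [show (-1 : ℚ) = -(1:ℚ) by norm_num, padicValRat.neg]; exact padicValRat.one
      have h2 : padicValRat q ((p:ℚ)) = 0 := by
        rw [show ((p:ℚ)) = ((p:ℕ):ℚ) from rfl, padicValRat.of_nat]
        have : padicValNat q p = 0 := padicValNat.eq_zero_of_not_dvd
          (fun hdvd => hqp ((Nat.prime_dvd_prime_iff_eq hq hp).mp hdvd))
        exact_mod_cast this
      rw [h1, padicValRat.pow _, h2]
      ring
    set t : ℕ → ℤ := fun i => padicValRat q (z i) with ht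
    have hDv : ∀ i, padicValRat q (a * z i ^ d + b) = t i - t (i + 1) := by
      intro i
      have h1 : t (i+1) = t i - padicValRat q (a * z i ^ d + b) := by
        show padicValRat q (z (i+1)) = _
        rw [hstep i, padicValRat.div (hz0 i) (hD i)]
      omega
    have hav : ∀ i, padicValRat q (a * z i ^ d) = d * t i + padicValRat q a := by
      intro i
      rw [padicValRat.mul ha (pow_ne_zero _ (hz0 i)), padicValRat.pow (z i)]
      show _ + (d:ℤ) * t i = _
      ring
    set α := padicValRat q a with hα
    have hneg : ∀ i, d * t i + α < 0 → t (i + 1) = t i - (d * t i + α) := by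
      intro i hlt
      have h1 : padicValRat q (a * z i ^ d + b) = d * t i + α := by
        rw [padicValRat.add_eq_of_lt (p := q) (hD i)
          (mul_ne_zero ha (pow_ne_zero _ (hz0 i))) hb0
          (by rw [hav i, hbq]; exact hlt), hav i]
      have := hDv i; omega
    have hpos' : ∀ i, 0 < d * t i + α → t (i + 1) = t i := by
      intro i hlt
      have h1 : padicValRat q (a * z i ^ d + b) = 0 := by
        rw [add_comm, padicValRat.add_eq_of_lt (p := q) (by rw [add_comm]; exact hD i) hb0
          (mul_ne_zero ha (pow_ne_zero _ (hz0 i))) (by rw [hav i, hbq]; exact hlt), hbq]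
      have := hDv i; omega
    have hzero : ∀ i, d * t i + α = 0 → t (i + 1) ≤ t i := by
      intro i heq0
      have h1 : 0 ≤ padicValRat q (a * z i ^ d + b) := by
        have hmin := padicValRat.min_le_padicValRat_add (p := q) (hD i)
        rw [hav i, hbq, heq0] at hmin
        simpa using hmin
      have := hDv i; omega
    have htper : ∀ i, t (i + n) = t i := by
      intro i
      show padicValRat q (z (i + n)) = padicValRat q (z i)
      rw [hzper i]
    have hfin := seqB d hd α n (by omega) t htper hneg hpos' hzero
    intro i
    have := hDv i
    have := hfin i
    omega
  have hDpow : ∀ i, ∃ sc : ℚ × ℤ, (sc.1 = 1 ∨ sc.1 = -1) ∧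
      a * z i ^ d + b = sc.1 * (p:ℚ) ^ sc.2 := by
    intro i
    obtain ⟨s, c, hs, hsm⟩ := part_c p hp _ (hD i) (fun q hq hqp => hDval q hq hqp i)
    exact ⟨(s, c), hs, hsm⟩
  choose sc hscs hsceq using hDpow
  -- Part D : z i = ε i * p ^ m i * z 0
  have hzm : ∀ i, ∃ em : ℚ × ℤ, (em.1 = 1 ∨ em.1 = -1) ∧
      z i = em.1 * (p:ℚ) ^ em.2 * z 0 := by
    intro i
    induction i with
    | zero => exact ⟨(1, 0), Or.inl rfl, by norm_num⟩
    | succ i ih =>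
      obtain ⟨⟨ε, μ⟩, hεs1, hε1⟩ := ih
      refine ⟨(ε * (sc i).1, μ - (sc i).2), mul_sign' hεs1 (hscs i), ?_⟩
      rw [hstep i, hsceq i, hε1, div_eq_iff (by rw [← hsceq i]; exact hD i)]
      show ε * (p:ℚ) ^ μ * z 0
        = ε * (sc i).1 * (p:ℚ) ^ (μ - (sc i).2) * z 0 * ((sc i).1 * (p:ℚ) ^ (sc i).2)
      have hh : ε * (sc i).1 * (p:ℚ) ^ (μ - (sc i).2) * z 0 * ((sc i).1 * (p:ℚ) ^ (sc i).2)
          = ((sc i).1 * (sc i).1) * (ε * ((p:ℚ) ^ (μ - (sc i).2) * (p:ℚ) ^ (sc i).2) * z 0) := by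
        ring
      rw [hh, sign_mul_self' (hscs i), ← zpow_add₀ (ne_of_gt hppos), one_mul,
        show μ - (sc i).2 + (sc i).2 = μ by ring]
  choose em hεs hεz using hzm
  set ε : ℕ → ℚ := fun i => (em i).1 with hεdef
  set m : ℕ → ℤ := fun i => (em i).2 with hmdef
  have hεs' : ∀ i, ε i = 1 ∨ ε i = -1 := hεs
  have hεz' : ∀ i, z i = ε i * (p:ℚ) ^ m i * z 0 := hεz
  have hzz : ∀ i j, z i = z j → ε i = ε j ∧ m i = m j := by
    intro i j h
    apply sign_zpow_inj' p hp.two_le (hεs' i) (hεs' j)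
    have h2 := hεz' j
    rw [← h, hεz' i] at h2
    exact mul_right_cancel₀ (hz0 0) h2
  have hm0 : ε 0 = 1 ∧ m 0 = 0 := by
    have h3 : ε 0 * (p:ℚ) ^ m 0 * z 0 = 1 * (p:ℚ) ^ (0:ℤ) * z 0 := by
      rw [← hεz' 0]; norm_num
    exact sign_zpow_inj' p hp.two_le (hεs' 0) (Or.inl rfl) (mul_right_cancel₀ (hz0 0) h3)
  have hper_em : ∀ i, ε (i + n) = ε i ∧ m (i + n) = m i := fun i => hzz _ _ (hzper i)
  set A := a * z 0 ^ d with hA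
  have hA0 : A ≠ 0 := mul_ne_zero ha (pow_ne_zero _ (hz0 0))
  have hzne : ∀ i, (p:ℚ) ^ m i ≠ 0 := fun i => ne_of_gt (zpow_pos hppos _)
  have hbz : b = σ * (p:ℚ) ^ (e:ℤ) := by rw [hb, zpow_natCast]
  have hstar : ∀ i, ε i ^ d * A * (p:ℚ) ^ ((d:ℤ) * m i) + σ * (p:ℚ) ^ (e:ℤ)
      = (ε i * ε (i+1)) * (p:ℚ) ^ (m i - m (i+1)) := by
    intro i
    have h1 : a * z i ^ d + b = z i / z (i + 1) := by
      rw [eq_div_iff (hz0 (i+1)), hstep i, mul_comm]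
      exact div_mul_cancel₀ _ (hD i)
    have hDzz : a * z i ^ d + b = (ε i * ε (i+1)) * (p:ℚ) ^ (m i - m (i+1)) := by
      rw [h1, hεz' i, hεz' (i+1), zpow_sub₀ (ne_of_gt hppos),
        div_eq_iff (mul_ne_zero (mul_ne_zero (sgn_ne_zero' (hεs' (i+1))) (hzne (i+1))) (hz0 0))]
      have hh : ε i * ε (i + 1) * ((p:ℚ) ^ m i / (p:ℚ) ^ m (i + 1)) *
          (ε (i + 1) * (p:ℚ) ^ m (i + 1) * z 0)
          = (ε (i+1) * ε (i+1)) * (ε i * ((p:ℚ) ^ m i / (p:ℚ) ^ m (i+1) * (p:ℚ) ^ m (i+1)) * z 0) := by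
        ring
      rw [hh, sign_mul_self' (hεs' (i+1)), div_mul_cancel₀ _ (hzne (i+1)), one_mul]
    have hLHS : a * z i ^ d = ε i ^ d * A * (p:ℚ) ^ ((d:ℤ) * m i) := by
      rw [hεz' i, mul_pow, mul_pow, ← zpow_natCast ((p:ℚ) ^ m i) d, ← zpow_mul,
        show m i * (d:ℤ) = (d:ℤ) * m i from mul_comm _ _]
      show _ = _ * (a * z 0 ^ d) * _
      ring
    rw [← hLHS, ← hbz]
    exact hDzz

  -- Part E : p-adic valuation trichotomy
  haveI : Fact p.Prime := ⟨hp⟩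
  set v := padicValRat p A with hv
  set k : ℕ → ℤ := fun i => m i - m (i+1) with hkdef
  set Y : ℕ → ℤ := fun i => v + d * m i with hYdef
  have hεd : ∀ i, ε i ^ d = 1 ∨ ε i ^ d = -1 := by
    intro i
    rcases hεs' i with h|h
    · left; rw [h, one_pow]
    · rcases Nat.even_or_odd d with hev | hod
      · left; rw [h, hev.neg_one_pow]
      · right; rw [h, hod.neg_one_pow]
  have hT0 : ∀ i, ε i ^ d * A * (p:ℚ) ^ ((d:ℤ) * m i) ≠ 0 :=
    fun i => mul_ne_zero (mul_ne_zero (sgn_ne_zero' (hεd i)) hA0) (ne_of_gt (zpow_pos hppos _))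
  have hTvAux : ∀ (s : ℚ), (s = 1 ∨ s = -1) → padicValRat p s = 0 := by
    intro s hs
    rcases hs with h|h <;> rw [h]
    · exact padicValRat.one
    · rw [show (-1:ℚ) = -(1:ℚ) by norm_num, padicValRat.neg]; exact padicValRat.one
  have hTv : ∀ i, padicValRat p (ε i ^ d * A * (p:ℚ) ^ ((d:ℤ) * m i)) = Y i := by
    intro i
    rw [padicValRat.mul (mul_ne_zero (sgn_ne_zero' (hεd i)) hA0) (ne_of_gt (zpow_pos hppos _)),
      padicValRat.mul (sgn_ne_zero' (hεd i)) hA0, pv_zpow' p, hTvAux _ (hεd i)]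
    show 0 + v + (d:ℤ) * m i = v + (d:ℤ) * m i
    ring
  have htri : ∀ i, (k i < (e:ℤ) ∧ Y i = k i) ∨ ((e:ℤ) < k i ∧ Y i = (e:ℤ)) ∨
      (k i = (e:ℤ) ∧ ε i * ε (i+1) = -σ) :=
    fun i => triE p hσ (mul_sign' (hεs' i) (hεs' (i+1))) (hT0 i) (hTv i) (hstar i)
  have hYrec : ∀ i, Y (i+1) = Y i - d * k i := by
    intro i
    show v + (d:ℤ) * m (i+1) = (v + (d:ℤ) * m i) - d * (m i - m (i+1))
    ring
  have hYper : ∀ i, Y (i + n) = Y i := by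
    intro i
    show v + (d:ℤ) * m (i + n) = v + (d:ℤ) * m i
    rw [(hper_em i).2]
  have hpigeon : ∀ i j l, i < j → j < l → l < n → m i = m j → m j = m l → False := by
    intro i j l hij hjl hln hmij hmjl
    have hzi : ∀ x y, m x = m y → ε x = ε y → z x = z y := by
      intro x y h1 h2
      rw [hεz' x, hεz' y]
      show ε x * (p:ℚ) ^ m x * z 0 = ε y * (p:ℚ) ^ m y * z 0
      rw [h1, h2]
    have hpair : ε i = ε j ∨ ε i = ε l ∨ ε j = ε l := by
      rcases hεs' i with e1|e1 <;> rcases hεs' j with e2|e2 <;> rcases hεs' l with e3|e3 <;>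
        rw [e1, e2, e3] <;> norm_num
    rcases hpair with hh|hh|hh
    · have := hzinj i j (by omega) (by omega) (hzi i j hmij hh); omega
    · have := hzinj i l (by omega) (by omega) (hzi i l (hmij.trans hmjl) hh); omega
    · have := hzinj j l (by omega) (by omega) (hzi j l hmjl hh); omega
  have hpne : (p:ℚ) ≠ 0 := ne_of_gt hppos
  have hd' : (2:ℤ) ≤ (d:ℤ) := by exact_mod_cast hd
  by_cases hQ : p = 2 ∧ ∃ i₀, k i₀ = (e:ℤ)
  · obtain ⟨hp2, i₀, hk₀⟩ := hQ
    subst hp2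
    have hk₀' : m i₀ - m (i₀+1) = (e:ℤ) := hk₀
    have hδ₀ : ε i₀ * ε (i₀+1) = -σ := by
      rcases htri i₀ with ⟨h1, _⟩ | ⟨h1, _⟩ | ⟨_, h2⟩
      · omega
      · omega
      · exact h2
    have hV : ε i₀ ^ d * A * ((2:ℕ):ℚ)^((d:ℤ) * m i₀) = -σ * ((2:ℕ):ℚ)^((e:ℤ)+1) := by
      have h3 := hstar i₀
      rw [hδ₀, hk₀'] at h3
      have hq : ((2:ℕ):ℚ)^((e:ℤ)+1) = ((2:ℕ):ℚ)^(e:ℤ) * 2 := by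
        rw [zpow_add_one₀ hpne]
        norm_num
      rw [hq]
      linear_combination h3
    have hee : ε i₀ ^ d * ε i₀ ^ d = 1 := sign_mul_self' (hεd i₀)
    have hsub : ∀ i, (ε i ^ d * (-σ * ε i₀ ^ d)) *
        ((2:ℕ):ℚ)^(((e:ℤ) + 1 - (d:ℤ) * m i₀) + (d:ℤ) * m i)
        = ε i ^ d * A * ((2:ℕ):ℚ)^((d:ℤ) * m i) := by
      intro i
      have hU : ((2:ℕ):ℚ)^((d:ℤ) * m i₀) ≠ 0 := ne_of_gt (zpow_pos hppos _)
      apply mul_right_cancel₀ hU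
      have hsplit : ((2:ℕ):ℚ)^(((e:ℤ) + 1 - (d:ℤ) * m i₀) + (d:ℤ) * m i)
          * ((2:ℕ):ℚ)^((d:ℤ) * m i₀)
          = ((2:ℕ):ℚ)^((e:ℤ)+1) * ((2:ℕ):ℚ)^((d:ℤ) * m i) := by
        rw [← zpow_add₀ hpne, ← zpow_add₀ hpne]
        congr 1
        ring
      linear_combination (-σ * ε i ^ d * ε i₀ ^ d) * hsplit
        - (ε i ^ d * ((2:ℕ):ℚ)^((d:ℤ) * m i) * ε i₀ ^ d) * hV
        + (ε i ^ d * A * ((2:ℕ):ℚ)^((d:ℤ) * m i) * ((2:ℕ):ℚ)^((d:ℤ) * m i₀)) * hee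
    have hstar2 : ∀ i, (ε i ^ d * (-σ * ε i₀ ^ d)) *
        ((2:ℕ):ℚ)^(((e:ℤ) + 1 - (d:ℤ) * m i₀) + (d:ℤ) * m i) + σ * ((2:ℕ):ℚ)^(e:ℤ)
        = (ε i * ε (i+1)) * ((2:ℕ):ℚ)^(m i - m (i+1)) := by
      intro i
      rw [hsub i]
      exact hstar i
    set Y2 : ℕ → ℤ := fun i => ((e:ℤ) + 1 - (d:ℤ) * m i₀) + (d:ℤ) * m i with hY2def
    have hY2rec : ∀ i, Y2 (i+1) = Y2 i - (d:ℤ) * k i := by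
      intro i
      show ((e:ℤ) + 1 - (d:ℤ) * m i₀) + (d:ℤ) * m (i+1)
        = ((e:ℤ) + 1 - (d:ℤ) * m i₀) + (d:ℤ) * m i - (d:ℤ) * (m i - m (i+1))
      ring
    have hY2per : ∀ i, Y2 (i + n) = Y2 i := by
      intro i
      show ((e:ℤ) + 1 - (d:ℤ) * m i₀) + (d:ℤ) * m (i + n) = _
      rw [(hper_em i).2]
    have hY2e : ∀ j, Y2 j = ((e:ℤ) + 1 - (d:ℤ) * m i₀) + (d:ℤ) * m j := fun j => by
      rw [hY2def]
    have hke : ∀ j, k j = m j - m (j+1) := fun j => by rw [hkdef]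
    have hsgn2 : ∀ i, ε i ^ d * (-σ * ε i₀ ^ d) = 1 ∨ ε i ^ d * (-σ * ε i₀ ^ d) = -1 :=
      fun i => mul_sign' (hεd i) (mul_sign' (neg_sign hσ) (hεd i₀))
    have htype : ∀ i, (Y2 i = (e:ℤ) ∧ k i = Y2 i + 1) ∨
        (Y2 i = (e:ℤ) - 1 ∧ k i = (e:ℤ) - 1) ∨ (Y2 i = (e:ℤ) + 1 ∧ k i = (e:ℤ)) := by
      intro i
      have h := P2 (hsgn2 i) hσ (mul_sign' (hεs' i) (hεs' (i+1))) (hstar2 i)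
      rcases h with ⟨h1, _, _, h4⟩ | ⟨h1, _, _, h4⟩ | ⟨h1, _, _, h4⟩
      · left
        constructor
        · rw [hY2e i]; linarith only [h1]
        · rw [hke i, hY2e i]; linarith only [h4, h1]
      · right; left
        constructor
        · rw [hY2e i]; linarith only [h1]
        · rw [hke i]; linarith only [h4, h1]
      · right; right
        constructor
        · rw [hY2e i]; linarith only [h1]
        · rw [hke i]; linarith only [h4]
    have hrange : ∀ i, (e:ℤ) - 1 ≤ Y2 i := by
      intro i
      rcases htype i with ⟨h1, _⟩ | ⟨h1, _⟩ | ⟨h1, _⟩ <;> linarith only [h1]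
    have hde : (0:ℤ) ≤ (e:ℤ) := Int.natCast_nonneg e
    have htype' : ∀ i, (Y2 i = (e:ℤ) - 1 ∧ k i = (e:ℤ) - 1) ∨
        (Y2 i = (e:ℤ) + 1 ∧ k i = (e:ℤ)) := by
      intro i
      rcases htype i with ⟨h1, h2⟩ | h | h
      · exfalso
        have hr := hrange (i+1)
        have hrec := hY2rec i
        have hdk : (d:ℤ) * k i = (d:ℤ) * ((e:ℤ) + 1) := by
          rw [show k i = (e:ℤ) + 1 by linarith only [h1, h2]]
        have he2 : (1:ℤ) ≤ (e:ℤ) + 1 := by linarith only [hde]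
        have hbig : (2:ℤ) ≤ (d:ℤ) * ((e:ℤ) + 1) := by
          have := mul_le_mul hd' he2 zero_le_one (by linarith only [hd'])
          linarith only [this]
        linarith only [hr, hrec, hdk, hbig, h1]
      · exact Or.inl h
      · exact Or.inr h
    have hT3 : Y2 i₀ = (e:ℤ) + 1 := by
      rcases htype' i₀ with ⟨_, h2⟩ | ⟨h1, _⟩
      · exfalso; rw [hk₀] at h2; linarith only [h2]
      · exact h1
    have hde2 : (d:ℤ) * (e:ℤ) ≤ 2 := by
      have hrec := hY2rec i₀
      rw [hT3, hk₀] at hrec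
      have hr := hrange (i₀+1)
      linarith only [hrec, hr]
    rcases Nat.eq_zero_or_pos e with he0 | hepos
    · have he0' : (e:ℤ) = 0 := by rw [he0]; rfl
      have hYpos : ∀ i, 1 ≤ Y2 i := by
        intro i
        have hper2 : Y2 (i + n) = Y2 i := hY2per i
        have hi : i + n = (i + n - 1) + 1 := by omega
        rw [hi] at hper2
        have hrec := hY2rec (i + n - 1)
        rcases htype' (i + n - 1) with ⟨h1, h2⟩ | ⟨h1, h2⟩
        · have hdk : (d:ℤ) * k (i + n - 1) = -(d:ℤ) := by
            rw [show k (i + n - 1) = -1 by linarith only [h2, he0']]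
            ring
          linarith only [hrec, hper2, h1, hdk, hd', he0']
        · have hdk : (d:ℤ) * k (i + n - 1) = 0 := by
            rw [show k (i + n - 1) = 0 by linarith only [h2, he0']]
            ring
          linarith only [hrec, hper2, h1, hdk, he0']
      have hall3 : ∀ i, k i = 0 := by
        intro i
        rcases htype' i with ⟨h1, _⟩ | ⟨_, h2⟩
        · exfalso; linarith only [hYpos i, h1, he0']
        · linarith only [h2, he0']
      have hmall : ∀ i, m i = 0 := by
        intro i
        induction i with
        | zero => exact hm0.2
        | succ i ih =>
          have h1 := hall3 i
          rw [hke i] at h1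
          omega
      exact hpigeon 0 1 2 (by omega) (by omega) (by omega)
        (by rw [hmall 0, hmall 1]) (by rw [hmall 1, hmall 2])
    · have he1 : (1:ℤ) ≤ (e:ℤ) := by exact_mod_cast hepos
      have hed : (e:ℤ) = 1 ∧ (d:ℤ) = 2 := by
        have hh1 : (0:ℤ) ≤ ((d:ℤ) - 2) * (e:ℤ) :=
          mul_nonneg (by linarith only [hd']) (by linarith only [he1])
        have hh2 : (0:ℤ) ≤ (d:ℤ) * ((e:ℤ) - 1) :=
          mul_nonneg (by linarith only [hd']) (by linarith only [he1])
        constructor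
        · linarith only [hh1, hde2, he1]
        · linarith only [hh2, hde2, hd']
      have hallout : ∀ i, Y2 (i+1) = 0 := by
        intro i
        have hrec := hY2rec i
        rcases htype' i with ⟨h1, h2⟩ | ⟨h1, h2⟩
        · have hdk : (d:ℤ) * k i = 0 := by
            rw [show k i = 0 by linarith only [h2, hed.1]]
            ring
          linarith only [hrec, h1, hed.1, hdk]
        · have hdk : (d:ℤ) * k i = 2 := by
            rw [show k i = 1 by linarith only [h2, hed.1], mul_one, hed.2]
          linarith only [hrec, h1, hed.1, hdk]
      have hY20 : Y2 i₀ = 0 := by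
        have hper2 : Y2 (i₀ + n) = Y2 i₀ := hY2per i₀
        have hi : i₀ + n = (i₀ + n - 1) + 1 := by omega
        rw [hi] at hper2
        rw [hallout (i₀ + n - 1)] at hper2
        linarith only [hper2]
      linarith only [hY20, hT3, he1]
  · -- no Q-step (or p odd)
    push_neg at hQ
    have hv2 : padicValRat p 2 = 0 → True := fun _ => trivial
    have hstep' : ∀ i, Y (i+1) = (1 - d) * Y i ∨ (0 ≤ Y i ∧ Y (i+1) < (1 - d) * Y i) := by
      intro i
      rcases htri i with ⟨h1, h2⟩ | ⟨h1, h2⟩ | ⟨h1, h2⟩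
      · left; rw [hYrec i, h2]; ring
      · right
        constructor
        · rw [h2]; exact_mod_cast Int.natCast_nonneg e
        · rw [hYrec i, h2]
          nlinarith [h1, hd']
      · -- k i = e, so p ≠ 2 by hQ, p odd
        have hpne2 : p ≠ 2 := fun hp2 => (hQ hp2 i) h1
        have hTeq : ε i ^ d * A * (p:ℚ)^((d:ℤ) * m i) = (-2 * σ) * (p:ℚ)^(e:ℤ) := by
          have h3 := hstar i
          rw [h2, show m i - m (i+1) = (e:ℤ) from h1] at h3
          linear_combination h3
        have hYe : Y i = (e:ℤ) := by
          have h4 := hTv i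
          rw [hTeq, padicValRat.mul (by rcases hσ with h|h <;> rw [h] <;> norm_num)
            (ne_of_gt (zpow_pos hppos _)), pv_zpow' p] at h4
          have hval2 : padicValRat p (-2 * σ : ℚ) = 0 := by
            have hv2' : padicValRat p 2 = 0 := by
              rw [show (2:ℚ) = ((2:ℕ):ℚ) by norm_num, padicValRat.of_nat]
              have : padicValNat p 2 = 0 := padicValNat.eq_zero_of_not_dvd
                (fun hdvd => hpne2 ((Nat.prime_dvd_prime_iff_eq hp Nat.prime_two).mp hdvd))
              exact_mod_cast this
            rcases hσ with h|h <;> rw [h]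
            · rw [show (-2 * 1 : ℚ) = -2 by norm_num, padicValRat.neg]; exact hv2'
            · rw [show (-2 * -1 : ℚ) = 2 by norm_num]; exact hv2'
          rw [hval2] at h4
          omega
        left
        rw [hYrec i, hYe, h1]; ring
    have hgood := seqF d hd n (by omega) Y hYper hstep'
    rcases eq_or_lt_of_le hd with hd2 | hd3
    · -- d = 2
      have hd2' : d = 2 := hd2.symm
      subst hd2'
      have hrec2 : ∀ i, Y (i+1) = -Y i := by
        intro i
        have := (hgood i).1
        rw [this]
        push_cast
        ring
      have hY0v : Y 0 = v := by
        show v + ((2:ℕ):ℤ) * m 0 = v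
        rw [hm0.2]; ring
      by_cases hveq : v = 0
      · have hYall : ∀ i, Y i = 0 := by
          intro i
          induction i with
          | zero => rw [hY0v, hveq]
          | succ i ih => rw [hrec2 i, ih]; ring
        have hmall : ∀ i, m i = 0 := by
          intro i
          have h1 : v + ((2:ℕ):ℤ) * m i = 0 := hYall i
          omega
        exact hpigeon 0 1 2 (by omega) (by omega) (by omega)
          (by rw [hmall 0, hmall 1]) (by rw [hmall 1, hmall 2])
      · have hmrec : ∀ i, m (i+1) = -m i - v := by
          intro i
          have h1 : v + ((2:ℕ):ℤ) * m (i+1) = -(v + ((2:ℕ):ℤ) * m i) := hrec2 i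
          omega
        have hmpar : ∀ j, m (2*j) = 0 ∧ m (2*j+1) = -v := by
          intro j
          induction j with
          | zero =>
            refine ⟨by simpa using hm0.2, ?_⟩
            have := hmrec 0
            rw [hm0.2] at this
            simpa using this
          | succ j ih =>
            have a1 := hmrec (2*j+1)
            have a2 := hmrec (2*j+1+1)
            have e1 : 2*(j+1) = 2*j+1+1 := by ring
            rw [e1]
            constructor
            · omega
            · omega
        have hnm : m n = 0 := by
          have := (hper_em 0).2
          rwa [Nat.zero_add, hm0.2] at this
        have hneven : n % 2 = 0 := by
          rcases Nat.even_or_odd n with he | ho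
          · exact Nat.even_iff.mp he
          · exfalso
            obtain ⟨j, hj⟩ := ho
            rw [hj] at hnm
            have := (hmpar j).2
            omega
        rcases (show n = 4 ∨ 6 ≤ n by omega) with h4 | h6
        · -- n = 4 : explicit contradiction
          have hm1 : m 1 = -v := by simpa using (hmpar 0).2
          have hm2 : m 2 = 0 := by
            have := (hmpar 1).1
            norm_num at this
            exact this
          have hε2 : ε 2 = -1 := by
            rcases hεs' 2 with h|h
            · exfalso
              have hz20 : z 2 = z 0 := by
                rw [hεz' 2, hm2, h]
                norm_num
              have := hzinj 2 0 (by omega) (by omega) hz20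
              omega
            · exact h
          have hE1 : A + σ * (p:ℚ)^(e:ℤ) = ε 1 * (p:ℚ)^v := by
            have h := hstar 0
            rw [hm0.1, hm0.2, hm1, one_pow, mul_zero, zpow_zero, mul_one, one_mul, one_mul,
              zero_sub, neg_neg] at h
            exact h
          have hE2 : A * (p:ℚ)^(-(2*v)) + σ * (p:ℚ)^(e:ℤ) = -ε 1 * (p:ℚ)^(-v) := by
            have h := hstar 1
            rw [hm1, hm2, hε2] at h
            rw [show ε 1 ^ (2:ℕ) = ε 1 * ε 1 from sq (ε 1), sign_mul_self' (hεs' 1), one_mul] at h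
            rw [show ((2:ℕ):ℤ) * -v = -(2*v) by push_cast; ring] at h
            rw [show -v - (0:ℤ) = -v by ring] at h
            rw [show ε 1 * -1 = -ε 1 by ring] at h
            exact h
          have hE2' : A + σ * (p:ℚ)^((e:ℤ) + 2*v) = -ε 1 * (p:ℚ)^v := by
            have q1 : (p:ℚ)^(-(2*v)) * (p:ℚ)^(2*v) = 1 := by
              rw [← zpow_add₀ hpne, show -(2*v) + 2*v = (0:ℤ) by ring, zpow_zero]
            have q2 : (p:ℚ)^(e:ℤ) * (p:ℚ)^(2*v) = (p:ℚ)^((e:ℤ)+2*v) :=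
              (zpow_add₀ hpne _ _).symm
            have q3 : (p:ℚ)^(-v) * (p:ℚ)^(2*v) = (p:ℚ)^v := by
              rw [← zpow_add₀ hpne, show -v + 2*v = v by ring]
            linear_combination (p:ℚ)^(2*v) * hE2 - A * q1 - σ * q2 - ε 1 * q3
          have hkey : (p:ℚ)^((e:ℤ)+2*v) - (p:ℚ)^(e:ℤ) = (-2 * ε 1 * σ) * (p:ℚ)^v := by
            have S := sign_mul_self' hσ
            linear_combination σ * hE2' - σ * hE1 -
              ((p:ℚ)^((e:ℤ)+2*v) - (p:ℚ)^(e:ℤ)) * S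
          have hc : (-2 * ε 1 * σ) = 2 ∨ (-2 * ε 1 * σ) = -2 := by
            rcases hεs' 1 with h|h <;> rcases hσ with h'|h' <;> rw [h, h'] <;> norm_num
          exact lemL2 p hp ((e:ℤ)+2*v) (e:ℤ) v (by omega) (by omega) _ hc hkey
        · -- n ≥ 6 : pigeonhole on indices 0, 2, 4
          have hm2 : m 2 = 0 := by
            have := (hmpar 1).1; norm_num at this; exact this
          have hm4 : m 4 = 0 := by
            have := (hmpar 2).1; norm_num at this; exact this
          exact hpigeon 0 2 4 (by omega) (by omega) (by omega)
            (by rw [hm0.2, hm2]) (by rw [hm2, hm4])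
    · -- d ≥ 3
      have hYall : ∀ i, Y i = 0 := by
        intro i
        have h2 := (hgood i).2
        have h3 : |Y i| = 0 := by
          rcases mul_eq_zero.mp h2 with h|h
          · exfalso; omega
          · exact h
        rw [abs_eq_zero] at h3
        exact h3
      have hmall : ∀ i, m i = 0 := by
        intro i
        have h1 : v + (d:ℤ) * m i = 0 := hYall i
        have h0 : v + (d:ℤ) * m 0 = 0 := hYall 0
        rw [hm0.2] at h0
        have : (d:ℤ) * m i = 0 := by omega
        rcases mul_eq_zero.mp this with h|h
        · exfalso; omega
        · exact h
      exact hpigeon 0 1 2 (by omega) (by omega) (by omega)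
        (by rw [hmall 0, hmall 1]) (by rw [hmall 1, hmall 2])
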